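/- Let k be a field with char k ≠ 2, a ∈ k \ {0} a non-square, K = k(√a), and Gal(K/k) = ⟨σ⟩. Extend σ to K(x,y) by σ(x) = x, σ(y) = b/y for a constant b ∈ k \ {0}. Then K(x,y)^⟨σ⟩ is purely transcendental over k (of transcendence degree 2) if and only if the Hilbert symbol (a,b)_{2,k} = 0. -/

import Mathlib

open Polynomial

/-- `L` is purely transcendental over `k` of transcendence degree `m`:
it is generated over `k` by `m` algebraically independent elements. -/
def IsRationalOfDeg (k : Type) {F : Type} [Field k] [Field F] [Algebra k F]
    (L : IntermediateField k F) (m : ℕ) : Prop :=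
  ∃ u : Fin m → F, (∀ i, u i ∈ L) ∧ AlgebraicIndependent k u ∧
    L = IntermediateField.adjoin k (Set.range u)

/-- The Hilbert symbol `(a,b)_{2,k}` vanishes, i.e. `X² − aY² − bZ²` has a
nontrivial zero over `k`. -/
def HilbertSymbolZero (k : Type) [Field k] (a b : k) : Prop :=
  ∃ x y z : k, (x ≠ 0 ∨ y ≠ 0 ∨ z ≠ 0) ∧ x ^ 2 - a * y ^ 2 - b * z ^ 2 = 0

section Helpers

variable {k F : Type} [Field k] [Field F] [Algebra k F]

lemma mem_ff_of (σ : F ≃ₐ[k] F) {e : F} (h : σ e = e) :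
    e ∈ IntermediateField.fixedField (Subgroup.zpowers σ) := by
  intro g
  have hg : (g : F ≃ₐ[k] F) ∈ Subgroup.zpowers σ := g.2
  have hst : σ ∈ MulAction.stabilizer (F ≃ₐ[k] F) e := by
    simpa [MulAction.mem_stabilizer_iff, AlgEquiv.smul_def] using h
  have := (Subgroup.zpowers_le.mpr hst) hg
  simpa [MulAction.mem_stabilizer_iff, Subgroup.smul_def, AlgEquiv.smul_def] using this

lemma ff_apply (σ : F ≃ₐ[k] F) {e : F}
    (h : e ∈ IntermediateField.fixedField (Subgroup.zpowers σ)) : σ e = e := by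
  have := h ⟨σ, Subgroup.mem_zpowers σ⟩
  simpa [AlgEquiv.smul_def] using this

end Helpers

section Transc

variable {K F : Type} [Field K] [Field F] [Algebra K F]

lemma transcendental_moebius (A : Subalgebra K F) {y w c t : F}
    (hwA : w ∈ A) (hcA : c ∈ A) (hw0 : w ≠ 0) (hc0 : c ≠ 0) (h2 : (2 : F) ≠ 0)
    (ht : t * (y - c) = w * (y + c)) (hy : Transcendental A y) :
    Transcendental A t := by
  rintro ⟨P, hP0, hPt⟩
  set n := P.natDegree with hn
  set wA : A := ⟨w, hwA⟩
  set cA : A := ⟨c, hcA⟩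
  set Q : Polynomial A := ∑ i ∈ Finset.range (n + 1),
    C (P.coeff i) * (C wA * X + C cA * C wA) ^ i * (X - C cA) ^ (n - i) with hQdef
  have hmap : ∀ r : A, algebraMap A F r = (r : F) := fun r => rfl
  have hq_eval : ∀ u : F, Polynomial.aeval u Q =
      ∑ i ∈ Finset.range (n + 1),
        algebraMap A F (P.coeff i) * (w * u + c * w) ^ i * (u - c) ^ (n - i) := by
    intro u
    simp [hQdef, map_sum, wA, cA, hmap]
  have hQy : Polynomial.aeval y Q = 0 := by
    rw [hq_eval]
    have hterm : ∀ i ∈ Finset.range (n + 1),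
        algebraMap A F (P.coeff i) * (w * y + c * w) ^ i * (y - c) ^ (n - i)
          = (y - c) ^ n * (P.coeff i • t ^ i) := by
      intro i hi
      have hin : i ≤ n := Nat.lt_succ_iff.mp (Finset.mem_range.mp hi)
      have h1 : w * y + c * w = t * (y - c) := by linear_combination -ht
      rw [h1, mul_pow, Algebra.smul_def, hmap]
      rw [show (y - c) ^ n = (y - c) ^ i * (y - c) ^ (n - i) by
        rw [← pow_add, Nat.add_sub_cancel' hin]]
      ring
    rw [Finset.sum_congr rfl hterm, ← Finset.mul_sum, ← Polynomial.aeval_eq_sum_range, hPt,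
      mul_zero]
  have hQc : Polynomial.aeval c Q = algebraMap A F (P.coeff n) * (2 * w * c) ^ n := by
    rw [hq_eval]
    rw [Finset.sum_eq_single n]
    · simp only [sub_self, Nat.sub_self, pow_zero, mul_one]
      congr 1
      ring
    · intro i hi hne
      have : n - i ≠ 0 := Nat.sub_ne_zero_of_lt
        (lt_of_le_of_ne (Nat.lt_succ_iff.mp (Finset.mem_range.mp hi)) hne)
      rw [sub_self, zero_pow this, mul_zero]
    · intro h
      exact absurd (Finset.self_mem_range_succ n) h
  have hQ0 : Q ≠ 0 := by
    intro h
    rw [h, map_zero] at hQc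
    have hcn : P.coeff n ≠ 0 := Polynomial.leadingCoeff_ne_zero.mpr hP0
    have h2wc : (2 * w * c : F) ≠ 0 := mul_ne_zero (mul_ne_zero h2 hw0) hc0
    have hz : algebraMap A F (P.coeff n) = 0 := by
      rcases mul_eq_zero.mp hQc.symm with h' | h'
      · exact h'
      · exact absurd h' (pow_ne_zero _ h2wc)
    rw [hmap] at hz
    exact hcn (by exact_mod_cast hz)
  exact hy ⟨Q, hQ0, hQy⟩

/-- An explicit equivalence `Option (Fin 1) ≃ Fin 2`. -/
def eOF : Option (Fin 1) ≃ Fin 2 where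
  toFun o := o.elim 1 (fun _ => 0)
  invFun j := if j = 0 then some 0 else none
  left_inv := by decide
  right_inv := by decide

lemma algInd_pair {x y t w c : F} (hind : AlgebraicIndependent K ![x, y])
    (hw : ∃ u : K, algebraMap K F u = w) (hc : ∃ u : K, algebraMap K F u = c)
    (hw0 : w ≠ 0) (hc0 : c ≠ 0) (h2 : (2 : F) ≠ 0)
    (ht : t * (y - c) = w * (y + c)) :
    AlgebraicIndependent K ![x, t] := by
  have hx1 : AlgebraicIndependent K ![x] := by
    rw [algebraicIndependent_iff_transcendental]
    simpa using hind.transcendental 0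
  set A := Algebra.adjoin K (Set.range ![x]) with hA
  have hcomp : ∀ z : F, (![x, z] ∘ eOF) = fun o : Option (Fin 1) => o.elim z ![x] := by
    intro z
    funext o
    rcases o with _ | i
    · rfl
    · have : i = 0 := Subsingleton.elim _ _
      subst this
      rfl
  have hty : Transcendental A y := by
    have h1 : AlgebraicIndependent K (![x, y] ∘ eOF) :=
      (algebraicIndependent_equiv eOF).mpr hind
    rw [hcomp] at h1
    exact (hx1.option_iff_transcendental y).mp h1
  obtain ⟨uw, huw⟩ := hw
  obtain ⟨uc, huc⟩ := hc
  have hwA : w ∈ A := huw ▸ Subalgebra.algebraMap_mem A uw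
  have hcA : c ∈ A := huc ▸ Subalgebra.algebraMap_mem A uc
  have htt : Transcendental A t :=
    transcendental_moebius A hwA hcA hw0 hc0 h2 ht hty
  have h3 : AlgebraicIndependent K (fun o : Option (Fin 1) => o.elim t ![x]) :=
    (hx1.option_iff_transcendental t).mpr htt
  refine (algebraicIndependent_equiv eOF).mp ?_
  rw [hcomp]
  exact h3

end Transc

set_option maxHeartbeats 1000000 in
/-- For `K = k(√a)` with `Gal(K/k) = ⟨σ⟩` extended to `K(x,y)` by `σ(x) = x`,
`σ(y) = b/y` (`b ∈ k \ {0}`), the fixed field `K(x,y)^⟨σ⟩` is purely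
transcendental of degree 2 over `k` iff `(a,b)_{2,k} = 0`. -/
theorem stmt6 (k K F : Type) [Field k] [Field K] [Field F]
    [Algebra k K] [Algebra K F] [Algebra k F] [IsScalarTower k K F]
    (h2 : (2 : k) ≠ 0) (a b : k) (ha : a ≠ 0) (hb : b ≠ 0)
    (hnsq : ¬∃ r : k, r ^ 2 = a)
    (sqa : K) (hsqa : sqa ^ 2 = algebraMap k K a)
    (hKgen : IntermediateField.adjoin k {sqa} = ⊤)
    (x y : F) (hind : AlgebraicIndependent K ![x, y])
    (hadj : IntermediateField.adjoin K {x, y} = ⊤)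
    (σ : F ≃ₐ[k] F)
    (hσK : σ (algebraMap K F sqa) = - algebraMap K F sqa)
    (hx : σ x = x) (hy : σ y = algebraMap k F b / y) :
    IsRationalOfDeg k (IntermediateField.fixedField (Subgroup.zpowers σ)) 2 ↔
      HilbertSymbolZero k a b := by
  set w : F := algebraMap K F sqa with hwdef
  set aF : F := algebraMap k F a with haFdef
  set bF : F := algebraMap k F b with hbFdef
  have hw2 : w ^ 2 = aF := by
    rw [hwdef, ← map_pow, hsqa, haFdef, IsScalarTower.algebraMap_apply k K F]
  have hbF0 : bF ≠ 0 := by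
    simpa [hbFdef] using (map_ne_zero (algebraMap k F)).mpr hb
  have haF0 : aF ≠ 0 := by
    simpa [haFdef] using (map_ne_zero (algebraMap k F)).mpr ha
  have h2F : (2 : F) ≠ 0 := by
    intro h
    apply h2
    apply (_root_.map_eq_zero (algebraMap k F)).mp
    rw [map_ofNat]
    exact h
  have hw0 : w ≠ 0 := by
    intro h
    apply haF0
    rw [← hw2, h]
    ring
  have hy0 : y ≠ 0 := by simpa using hind.ne_zero 1
  constructor
  · -- rational → Hilbert symbol zero
    intro hrat
    rcases finite_or_infinite k with hfin | hinf
    · -- finite field case: every conic has a point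
      have : Fintype k := Fintype.ofFinite k
      have hchar : ringChar k ≠ 2 := by
        intro hc
        haveI : CharP k 2 := hc ▸ ringChar.charP k
        apply h2
        have : ((2 : ℕ) : k) = 0 := CharP.cast_eq_zero k 2
        simpa using this
      obtain ⟨x0, y0, hroot⟩ := FiniteField.exists_root_sum_quadratic
        (f := X ^ 2 - C b) (g := C (-a) * X ^ 2)
        (by
          simpa using Polynomial.degree_X_pow_sub_C (by norm_num : 0 < 2) b)
        (Polynomial.degree_C_mul_X_pow 2 (neg_ne_zero.mpr ha))
        (FiniteField.odd_card_of_char_ne_two hchar)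
      refine ⟨x0, y0, 1, Or.inr (Or.inr one_ne_zero), ?_⟩
      simp only [Polynomial.eval_sub, Polynomial.eval_pow, Polynomial.eval_X,
        Polynomial.eval_C, Polynomial.eval_mul] at hroot
      linear_combination hroot
    · -- infinite field case: specialize a polynomial solution
      obtain ⟨u, humem, huind, huadj⟩ := hrat
      set S : F := y + bF / y with hSdef
      set D : F := w * (y - bF / y) with hDdef
      have hσb : σ bF = bF := σ.commutes b
      have hσS : σ S = S := by
        rw [hSdef, map_add, hy, map_div₀, hσb, hy]
        field_simp
        ring
      have hσD : σ D = D := by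
        rw [hDdef, map_mul, map_sub, hy, map_div₀, hσb, hy, hσK]
        field_simp
        ring
      have get_rep : ∀ z ∈ IntermediateField.adjoin k (Set.range u),
          ∃ P Q : MvPolynomial (Fin 2) k, MvPolynomial.aeval u Q ≠ 0 ∧
            z = MvPolynomial.aeval u P / MvPolynomial.aeval u Q := by
        intro z hz
        rw [IntermediateField.mem_adjoin_range_iff] at hz
        obtain ⟨P, Q, h⟩ := hz
        by_cases hQ : MvPolynomial.aeval u Q = 0
        · exact ⟨0, 1, by simp, by simp [h, hQ]⟩
        · exact ⟨P, Q, hQ, h⟩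
      obtain ⟨P, Q, hQ0, hSPQ⟩ := get_rep S (huadj ▸ mem_ff_of σ hσS)
      obtain ⟨R, T, hT0, hDRT⟩ := get_rep D (huadj ▸ mem_ff_of σ hσD)
      have hybF : y * (bF / y) = bF := mul_div_cancel₀ _ hy0
      have hrel : aF * S ^ 2 - D ^ 2 = 4 * (aF * bF) := by
        have hkey : S ^ 2 - (y - bF / y) ^ 2 = 4 * bF := by
          rw [hSdef]
          linear_combination 4 * hybF
        calc aF * S ^ 2 - D ^ 2 = aF * (S ^ 2 - (y - bF / y) ^ 2) := by
              rw [hDdef, mul_pow, hw2]; ring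
          _ = 4 * (aF * bF) := by rw [hkey]; ring
      set p0 : F := MvPolynomial.aeval u P with hp0def
      set q0 : F := MvPolynomial.aeval u Q with hq0def
      set r0 : F := MvPolynomial.aeval u R with hr0def
      set t0 : F := MvPolynomial.aeval u T with ht0def
      have h5 : aF * (p0 ^ 2 * t0 ^ 2) - r0 ^ 2 * q0 ^ 2
          = 4 * (aF * bF) * (q0 ^ 2 * t0 ^ 2) := by
        rw [hSPQ, hDRT] at hrel
        field_simp at hrel
        linear_combination hrel
      set W : MvPolynomial (Fin 2) k :=
        (MvPolynomial.C a * P * T) ^ 2 - MvPolynomial.C a * (R * Q) ^ 2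
          - MvPolynomial.C b * (MvPolynomial.C (2 * a) * T * Q) ^ 2 with hWdef
      have haW : MvPolynomial.aeval u W = 0 := by
        simp only [hWdef, map_sub, map_pow, map_mul, MvPolynomial.aeval_C, map_ofNat,
          ← hp0def, ← hq0def, ← hr0def, ← ht0def, ← haFdef, ← hbFdef]
        linear_combination aF * h5
      have hW0 : W = 0 := by
        rw [algebraicIndependent_iff] at huind
        exact huind W haW
      have hZpoly : (MvPolynomial.C (2 * a) * T * Q : MvPolynomial (Fin 2) k) ≠ 0 := by
        intro h
        have hev : MvPolynomial.aeval u (MvPolynomial.C (2 * a) * T * Q) = 0 := by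
          rw [h, map_zero]
        simp only [map_mul, MvPolynomial.aeval_C, map_ofNat, ← hq0def, ← ht0def,
          ← haFdef] at hev
        rcases mul_eq_zero.mp hev with h' | h'
        · rcases mul_eq_zero.mp h' with h'' | h''
          · rcases mul_eq_zero.mp h'' with h3 | h3
            · exact h2F h3
            · exact haF0 h3
          · exact hT0 h''
        · exact hQ0 h'
      have hptex : ¬∀ v : Fin 2 → k,
          MvPolynomial.eval v (MvPolynomial.C (2 * a) * T * Q) = 0 := by
        intro hall
        apply hZpoly
        apply MvPolynomial.funext
        intro v
        rw [hall v, map_zero]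
      push_neg at hptex
      obtain ⟨v, hv⟩ := hptex
      refine ⟨MvPolynomial.eval v (MvPolynomial.C a * P * T),
        MvPolynomial.eval v (R * Q),
        MvPolynomial.eval v (MvPolynomial.C (2 * a) * T * Q),
        Or.inr (Or.inr hv), ?_⟩
      have hevW := congrArg (MvPolynomial.eval v) hW0
      simp only [hWdef, map_sub, map_pow, map_mul, MvPolynomial.eval_C, map_zero] at hevW
      simp only [map_mul, MvPolynomial.eval_C]
      linear_combination hevW
  · -- Hilbert symbol zero → rational
    intro hhs
    -- Step 1: b is a norm from K : b = p² - a q²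
    obtain ⟨x0, y0, z0, hnt, heq⟩ := hhs
    have hz0 : z0 ≠ 0 := by
      intro h
      subst h
      rcases eq_or_ne y0 0 with hy0' | hy0'
      · subst hy0'
        have hx00 : x0 = 0 := by
          have : x0 ^ 2 = 0 := by linear_combination heq
          exact pow_eq_zero_iff (by norm_num) |>.mp this
        subst hx00
        rcases hnt with h | h | h <;> simp at h
      · exact hnsq ⟨x0 / y0, by field_simp; linear_combination heq⟩
    set p : k := x0 / z0 with hpdef
    set q : k := y0 / z0 with hqdef
    have hpq : p ^ 2 - a * q ^ 2 = b := by
      rw [hpdef, hqdef]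
      field_simp
      linear_combination heq
    -- Step 2: basic elements
    set pF : F := algebraMap k F p with hpFdef
    set qF : F := algebraMap k F q with hqFdef
    set c : F := pF + qF * w with hcdef
    set cb : F := pF - qF * w with hcbdef
    have hccb : c * cb = bF := by
      have h1 : c * cb = pF ^ 2 - aF * qF ^ 2 := by
        rw [hcdef, hcbdef]
        linear_combination (-qF ^ 2) * hw2
      rw [h1, hpFdef, hqFdef, haFdef, hbFdef, ← map_pow, ← map_pow, ← map_mul, ← map_sub, hpq]
    have hc0 : c ≠ 0 := by
      intro h
      apply hbF0
      rw [← hccb, h, zero_mul]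
    have hcb0 : cb ≠ 0 := by
      intro h
      apply hbF0
      rw [← hccb, h, mul_zero]
    have hσc : σ c = cb := by
      rw [hcdef, hcbdef, map_add, map_mul, hσK, hpFdef, hqFdef,
        AlgEquiv.commutes, AlgEquiv.commutes]
      ring
    have hcK : algebraMap K F (algebraMap k K p + algebraMap k K q * sqa) = c := by
      rw [map_add, map_mul, ← IsScalarTower.algebraMap_apply k K F,
        ← IsScalarTower.algebraMap_apply k K F]
    have hyc : y - c ≠ 0 := by
      intro h
      have hy_eq : y = c := by linear_combination h
      have htr : Transcendental K y := by simpa using hind.transcendental 1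
      apply htr
      rw [hy_eq, ← hcK]
      exact isAlgebraic_algebraMap _
    -- Step 3: the invariant generator t
    set t : F := w * (y + c) / (y - c) with htdef
    have ht_lin : t * (y - c) = w * (y + c) := by
      rw [htdef]
      field_simp
    have hσt : σ t = t := by
      have hA : σ (y - c) = bF / y - cb := by rw [map_sub, hy, hσc]
      have hB : σ (y + c) = bF / y + cb := by rw [map_add, hy, hσc]
      have h1 := congrArg σ ht_lin
      rw [map_mul, map_mul, hA, hB, hσK] at h1
      have h2' : σ t * (bF - cb * y) = -w * (bF + cb * y) := by
        field_simp at h1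
        linear_combination h1
      rw [← hccb] at h2'
      have h3 : cb * (σ t * (c - y)) = cb * (-w * (c + y)) := by
        linear_combination h2'
      have h4 : σ t * (c - y) = -w * (c + y) := mul_left_cancel₀ hcb0 h3
      have h5 : σ t * (y - c) = t * (y - c) := by
        rw [ht_lin]
        linear_combination -h4
      exact mul_right_cancel₀ hyc h5
    set E := IntermediateField.adjoin k {x, t} with hEdef
    have hxE : x ∈ E := IntermediateField.subset_adjoin _ _ (by simp)
    have htE : t ∈ E := IntermediateField.subset_adjoin _ _ (by simp)
    have hEfix : ∀ e ∈ E, σ e = e := by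
      intro e he
      induction he using IntermediateField.adjoin_induction with
      | mem g hg =>
        rcases hg with rfl | rfl
        · exact hx
        · exact hσt
      | algebraMap r => exact σ.commutes r
      | add g₁ g₂ _ _ h₁ h₂ => rw [map_add, h₁, h₂]
      | inv g _ h => rw [map_inv₀, h]
      | mul g₁ g₂ _ _ h₁ h₂ => rw [map_mul, h₁, h₂]
    have hEle : E ≤ IntermediateField.fixedField (Subgroup.zpowers σ) :=
      fun e he => mem_ff_of σ (hEfix e he)
    have hwE : ∀ e, σ e = e → w ≠ e := by
      intro e hfix hwe
      have h1 : σ w = w := by rw [hwe]; exact hfix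
      rw [hσK] at h1
      have hww : w * 2 = 0 := by linear_combination -h1
      rcases mul_eq_zero.mp hww with h | h
      · exact hw0 h
      · exact h2F h
    have htw : t - w ≠ 0 := by
      intro h
      have ht_eq : t = w := by linear_combination h
      rw [ht_eq] at ht_lin
      have hh : w * (c * 2) = 0 := by linear_combination -ht_lin
      rcases mul_eq_zero.mp hh with h' | h'
      · exact hw0 h'
      · rcases mul_eq_zero.mp h' with h'' | h''
        · exact hc0 h''
        · exact h2F h''
    -- Step 4: adjoin k {x, t, w} = ⊤
    have htop : IntermediateField.adjoin k {x, t, w} = ⊤ := by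
      rw [eq_top_iff]
      rintro f -
      have hf : f ∈ IntermediateField.adjoin K {x, y} := by rw [hadj]; trivial
      have hwM : w ∈ IntermediateField.adjoin k {x, t, w} :=
        IntermediateField.subset_adjoin _ _ (by simp)
      have htM : t ∈ IntermediateField.adjoin k {x, t, w} :=
        IntermediateField.subset_adjoin _ _ (by simp)
      have hcM : c ∈ IntermediateField.adjoin k {x, t, w} := by
        rw [hcdef, hpFdef, hqFdef]
        exact add_mem (IntermediateField.algebraMap_mem _ p)
          (mul_mem (IntermediateField.algebraMap_mem _ q) hwM)
      induction hf using IntermediateField.adjoin_induction with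
      | mem g hg =>
        rcases hg with rfl | rfl
        · exact IntermediateField.subset_adjoin _ _ (by simp)
        · have hy_eq : g = c * (t + w) / (t - w) := by
            rw [eq_div_iff htw]
            linear_combination ht_lin
          rw [hy_eq]
          exact div_mem (mul_mem hcM (add_mem htM hwM)) (sub_mem htM hwM)
      | algebraMap κ =>
        have hκ : κ ∈ IntermediateField.adjoin k {sqa} := by rw [hKgen]; trivial
        induction hκ using IntermediateField.adjoin_induction with
        | mem g hg =>
          rcases hg with rfl
          exact hwM
        | algebraMap r =>
          rw [← IsScalarTower.algebraMap_apply k K F]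
          exact IntermediateField.algebraMap_mem _ r
        | add g₁ g₂ _ _ h₁ h₂ => rw [map_add]; exact add_mem h₁ h₂
        | inv g _ h => rw [map_inv₀]; exact inv_mem h
        | mul g₁ g₂ _ _ h₁ h₂ => rw [map_mul]; exact mul_mem h₁ h₂
      | add g₁ g₂ _ _ h₁ h₂ => exact add_mem h₁ h₂
      | inv g _ h => exact inv_mem h
      | mul g₁ g₂ _ _ h₁ h₂ => exact mul_mem h₁ h₂
    -- Step 5: decomposition F = E + E·w
    have haFE : aF ∈ E := by
      rw [haFdef]
      exact IntermediateField.algebraMap_mem E a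
    have hdecomp : ∀ f : F, ∃ α β, α ∈ E ∧ β ∈ E ∧ f = α + β * w := by
      intro f
      have hf : f ∈ IntermediateField.adjoin k {x, t, w} := by rw [htop]; trivial
      induction hf using IntermediateField.adjoin_induction with
      | mem g hg =>
        rcases hg with rfl | rfl | rfl
        · exact ⟨_, 0, hxE, zero_mem E, by ring⟩
        · exact ⟨_, 0, htE, zero_mem E, by ring⟩
        · exact ⟨0, 1, zero_mem E, one_mem E, by ring⟩
      | algebraMap r =>
        exact ⟨algebraMap k F r, 0, IntermediateField.algebraMap_mem E r, zero_mem E, by ring⟩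
      | add g₁ g₂ _ _ h₁ h₂ =>
        obtain ⟨α₁, β₁, hα₁, hβ₁, rfl⟩ := h₁
        obtain ⟨α₂, β₂, hα₂, hβ₂, rfl⟩ := h₂
        exact ⟨α₁ + α₂, β₁ + β₂, add_mem hα₁ hα₂, add_mem hβ₁ hβ₂, by ring⟩
      | mul g₁ g₂ _ _ h₁ h₂ =>
        obtain ⟨α₁, β₁, hα₁, hβ₁, rfl⟩ := h₁
        obtain ⟨α₂, β₂, hα₂, hβ₂, rfl⟩ := h₂
        refine ⟨α₁ * α₂ + β₁ * β₂ * aF, α₁ * β₂ + β₁ * α₂,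
          add_mem (mul_mem hα₁ hα₂) (mul_mem (mul_mem hβ₁ hβ₂) haFE),
          add_mem (mul_mem hα₁ hβ₂) (mul_mem hβ₁ hα₂), ?_⟩
        linear_combination (β₁ * β₂) * hw2
      | inv g _ h =>
        obtain ⟨α, β, hα, hβ, rfl⟩ := h
        by_cases hβ0 : β = 0
        · subst hβ0
          exact ⟨α⁻¹, 0, inv_mem hα, zero_mem E, by simp⟩
        · have hδ : α ^ 2 - aF * β ^ 2 ≠ 0 := by
            intro hδ0
            have hfac : (α - w * β) * (α + w * β) = 0 := by
              linear_combination hδ0 - β ^ 2 * hw2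
            rcases mul_eq_zero.mp hfac with h' | h'
            · have hw_eq : w = α / β := by
                rw [eq_div_iff hβ0]
                linear_combination -h'
              exact hwE (α / β) (hEfix _ (div_mem hα hβ)) hw_eq
            · have hw_eq : w = -α / β := by
                rw [eq_div_iff hβ0]
                linear_combination h'
              exact hwE (-α / β) (hEfix _ (div_mem (neg_mem hα) hβ)) hw_eq
          have hδE : α ^ 2 - aF * β ^ 2 ∈ E :=
            sub_mem (pow_mem hα 2) (mul_mem haFE (pow_mem hβ 2))
          refine ⟨α / (α ^ 2 - aF * β ^ 2), -β / (α ^ 2 - aF * β ^ 2),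
            div_mem hα hδE, div_mem (neg_mem hβ) hδE, ?_⟩
          have hmul : (α + β * w) *
              (α / (α ^ 2 - aF * β ^ 2) + -β / (α ^ 2 - aF * β ^ 2) * w) = 1 := by
            rw [mul_comm (-β / _) w, ← mul_div_assoc, ← add_div, mul_div_assoc',
              div_eq_one_iff_eq hδ]
            linear_combination -hw2 * β ^ 2
          rw [inv_eq_of_mul_eq_one_right hmul]
    -- Step 6: fixedField = E
    have ffle : IntermediateField.fixedField (Subgroup.zpowers σ) ≤ E := by
      intro e he
      have hσe := ff_apply σ he
      obtain ⟨α, β, hα, hβ, rfl⟩ := hdecomp e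
      have hσe2 : σ (α + β * w) = α - β * w := by
        rw [map_add, map_mul, hEfix α hα, hEfix β hβ, hσK]
        ring
      have heq2 : α - β * w = α + β * w := hσe2.symm.trans hσe
      have hβ0 : β = 0 := by
        have hh : β * (w * 2) = 0 := by linear_combination -heq2
        rcases mul_eq_zero.mp hh with h | h
        · exact h
        · rcases mul_eq_zero.mp h with h' | h'
          · exact absurd h' hw0
          · exact absurd h' h2F
      rw [hβ0]
      simpa using hα
    have ffeq : IntermediateField.fixedField (Subgroup.zpowers σ) = E :=
      le_antisymm ffle hEle
    -- Step 7: assemble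
    refine ⟨![x, t], ?_, ?_, ?_⟩
    · intro i
      fin_cases i
      · exact hEle hxE
      · exact hEle htE
    · refine AlgebraicIndependent.restrictScalars (algebraMap k K).injective ?_
      exact algInd_pair hind ⟨sqa, rfl⟩
        ⟨algebraMap k K p + algebraMap k K q * sqa, hcK⟩ hw0 hc0 h2F ht_lin
    · have hrange : Set.range ![x, t] = {x, t} := by
        ext g
        constructor
        · rintro ⟨i, rfl⟩
          fin_cases i
          · exact Set.mem_insert _ _
          · exact Set.mem_insert_of_mem _ rfl
        · intro hg
          rcases hg with rfl | rfl
          · exact ⟨0, rfl⟩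
          · exact ⟨1, rfl⟩
      rw [ffeq, hrange]
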